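/- Let u ≥ 11 be odd, let D_i = {d : 1 < d < u, d divides u, u/d ≡ 1 or 3 (mod 6), (2i - u + 2)/3 ≤ d ≤ 2i - u} for an integer i with (u+3)/2 ≤ i ≤ u - 3, and let r_i = (1/2)·Σ_{d ∈ D_i} (u/d - 1). Then r_i < u - i - 1. -/

import Mathlib

open Finset

set_option maxHeartbeats 1000000 in
lemma core_sum (u a K : ℕ) (ha : 3 ≤ a) (hK1 : 1 ≤ K) (hKa : K ≤ a)
    (hu : 7 * (a + 2 * (K - 1)) ≤ u) :
    ∑ j ∈ Finset.range K, ((u : ℝ) / (a + 2 * j) - 1) ≤ (u : ℝ) - 3 * a - 3 := by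
  obtain ⟨K', rfl⟩ : ∃ K', K = K' + 1 := ⟨K - 1, by omega⟩
  simp only [Nat.add_sub_cancel] at hu
  have haR : (3:ℝ) ≤ a := by exact_mod_cast ha
  have hKaR : (K':ℝ) + 1 ≤ a := by exact_mod_cast hKa
  have hK0 : (0:ℝ) ≤ K' := by positivity
  have huR : 7 * ((a:ℝ) + 2 * K') ≤ u := by exact_mod_cast hu
  set S : ℝ := ∑ j ∈ Finset.range (K' + 1), (u : ℝ) / (a + 2 * j) with hS
  have hrefl : ∑ j ∈ Finset.range (K' + 1), (u : ℝ) / ((a:ℝ) + 2 * ((K' - j : ℕ) : ℝ)) = S := by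
    have h := Finset.sum_range_reflect (fun j : ℕ => (u : ℝ) / ((a:ℝ) + 2 * (j:ℝ))) (K' + 1)
    simpa using h
  have h2S : 2 * S ≤ (K' + 1) * ((u:ℝ) * (2 * a + 2 * K') / (a * (a + 2 * K'))) := by
    have hsplit2 : 2 * S = ∑ j ∈ Finset.range (K' + 1),
        ((u : ℝ) / (a + 2 * j) + (u : ℝ) / ((a:ℝ) + 2 * ((K' - j : ℕ) : ℝ))) := by
      rw [Finset.sum_add_distrib, hrefl]; ring
    rw [hsplit2]
    calc ∑ j ∈ Finset.range (K' + 1),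
        ((u : ℝ) / (a + 2 * j) + (u : ℝ) / ((a:ℝ) + 2 * ((K' - j : ℕ) : ℝ)))
        ≤ ∑ _j ∈ Finset.range (K' + 1), ((u:ℝ) * (2 * a + 2 * K') / (a * (a + 2 * K'))) := by
          apply Finset.sum_le_sum
          intro j hj
          have hjK : j ≤ K' := Nat.lt_succ_iff.mp (Finset.mem_range.mp hj)
          set x : ℝ := (a : ℝ) + 2 * j with hx
          have hyc : ((a : ℝ) + 2 * ((K' - j : ℕ) : ℝ)) = 2 * a + 2 * K' - x := by
            have hcast : ((K' - j : ℕ) : ℝ) = (K' : ℝ) - j := Nat.cast_sub hjK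
            rw [hcast, hx]; ring
          rw [hyc]
          have hxa : (a:ℝ) ≤ x := by
            have : (0:ℝ) ≤ (j:ℝ) := by positivity
            rw [hx]; linarith
          have hxL : x ≤ (a:ℝ) + 2 * K' := by
            have : (j:ℝ) ≤ K' := by exact_mod_cast hjK
            rw [hx]; linarith
          have hx0 : (0:ℝ) < x := by linarith
          have hy0 : (0:ℝ) < 2 * a + 2 * K' - x := by linarith
          have ha0 : (0:ℝ) < a := by linarith
          have hL0 : (0:ℝ) < (a:ℝ) + 2 * K' := by linarith
          have hprod : (a:ℝ) * (a + 2 * K') ≤ x * (2 * a + 2 * K' - x) := by nlinarith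
          have hu0 : (0:ℝ) ≤ u := by positivity
          rw [div_add_div _ _ (ne_of_gt hx0) (ne_of_gt hy0),
            div_le_div_iff₀ (by positivity) (by positivity)]
          nlinarith [mul_le_mul_of_nonneg_left hprod
            (mul_nonneg hu0 (le_of_lt (by linarith : (0:ℝ) < 2*a+2*K')))]
      _ = (K' + 1) * ((u:ℝ) * (2 * a + 2 * K') / (a * (a + 2 * K'))) := by
          rw [Finset.sum_const, Finset.card_range]; push_cast; ring
  -- now the polynomial part
  have ha0 : (0:ℝ) < a := by linarith
  have hL0 : (0:ℝ) < (a:ℝ) + 2 * K' := by linarith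
  have hsum : ∑ j ∈ Finset.range (K' + 1), ((u : ℝ) / (a + 2 * j) - 1) = S - (K' + 1) := by
    rw [Finset.sum_sub_distrib, Finset.sum_const, Finset.card_range, hS]; push_cast; ring
  rw [hsum]
  have key : (K' + 1) * ((u:ℝ) * (2 * a + 2 * K') / (a * (a + 2 * K')))
      ≤ 2 * (u:ℝ) - 6 * a - 6 + 2 * (K' + 1) := by
    rw [← mul_div_assoc, div_le_iff₀ (by positivity)]
    have hc : (0:ℝ) ≤ 2*(a:ℝ)^2 + 2*a*K' - 2*K'^2 - 2*a - 2*K' := by nlinarith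
    have hq : (0:ℝ) ≤ 8*(a:ℝ)^2 + 16*a*K' - 14*K'^2 - 18*a - 14*K' := by
      nlinarith [mul_nonneg (by linarith : (0:ℝ) ≤ (a:ℝ) - 1 - K') hK0,
        mul_nonneg (by linarith : (0:ℝ) ≤ (a:ℝ) - 3) (by linarith : (0:ℝ) ≤ (a:ℝ))]
    nlinarith [mul_le_mul_of_nonneg_left huR hc, mul_nonneg hq (le_of_lt hL0)]
  linarith

theorem stmt_11 (u i : ℕ) (hu : Odd u) (hu11 : 11 ≤ u)
    (hi1 : u + 3 ≤ 2 * i) (hi2 : i ≤ u - 3) :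
    (∑ d ∈ (Finset.range u).filter
        (fun d => 1 < d ∧ d ∣ u ∧ (u / d % 6 = 1 ∨ u / d % 6 = 3) ∧
          2 * i + 2 ≤ 3 * d + u ∧ d + u ≤ 2 * i),
      ((u : ℝ) / d - 1)) / 2 < (u : ℝ) - i - 1 := by
  classical
  have hiu : 2 * i + 6 ≤ 2 * u := by omega
  have hiuR : 2 * (i:ℝ) + 6 ≤ 2 * u := by exact_mod_cast hiu
  set F := (Finset.range u).filter
      (fun d => 1 < d ∧ d ∣ u ∧ (u / d % 6 = 1 ∨ u / d % 6 = 3) ∧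
        2 * i + 2 ≤ 3 * d + u ∧ d + u ≤ 2 * i) with hF
  suffices h : ∑ d ∈ F, ((u:ℝ)/d - 1) < 2*u - 2*i - 2 by linarith
  have hmem : ∀ d ∈ F, d < u ∧ 1 < d ∧ d ∣ u ∧ (u / d % 6 = 1 ∨ u / d % 6 = 3) ∧
      2 * i + 2 ≤ 3 * d + u ∧ d + u ≤ 2 * i := by
    intro d hd
    rw [hF, Finset.mem_filter, Finset.mem_range] at hd
    exact ⟨hd.1, hd.2⟩
  -- basic fact: for d in F, u = d * (u/d) and u/d = 3 or u/d ≥ 7; d odd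
  have hud : ∀ d ∈ F, d % 2 = 1 ∧ (u = 3 * d ∨ 7 * d ≤ u) := by
    intro d hd
    obtain ⟨hdu, hd1, hdvd, hmod, _, _⟩ := hmem d hd
    obtain ⟨e, he⟩ := hdvd
    have hdpos : 0 < d := by omega
    have heval : u / d = e := by rw [he]; exact Nat.mul_div_cancel_left e hdpos
    rw [heval] at hmod
    have he1 : 1 < e := by
      rcases Nat.lt_or_ge e 2 with h | h
      · interval_cases e <;> omega
      · omega
    have he37 : e = 3 ∨ 7 ≤ e := by omega
    constructor
    · have huodd : u % 2 = 1 := Nat.odd_iff.mp hu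
      have : d % 2 = 1 ∨ d % 2 = 0 := by omega
      rcases this with h | h
      · exact h
      · exfalso
        obtain ⟨c, hc⟩ : 2 ∣ d := by omega
        have : u = 2 * (c * e) := by rw [he, hc]; ring
        omega
    · rcases he37 with h | h
      · left
        rw [he, h]; ring
      · right
        have h1 : 7 * d ≤ e * d := Nat.mul_le_mul_right d h
        have h2 : e * d = u := by rw [he]; ring
        omega
  rcases F.eq_empty_or_nonempty with hFe | hFne
  · rw [hFe]; simp; linarith
  set a := F.min' hFne with ha
  have haF : a ∈ F := F.min'_mem hFne
  obtain ⟨hau, ha1, hadvd, hamod, h2ia, _⟩ := hmem a haF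
  obtain ⟨haodd, ha37⟩ := hud a haF
  have ha3 : 3 ≤ a := by omega
  rcases ha37 with h3a | h7a
  · -- u = 3a : F = {a}
    have hFa : F = {a} := by
      apply Finset.eq_singleton_iff_unique_mem.mpr
      refine ⟨haF, ?_⟩
      intro d hd
      have hale : a ≤ d := F.min'_le d hd
      obtain ⟨_, h37⟩ := hud d hd
      rcases h37 with h | h
      · omega
      · omega
    rw [hFa, Finset.sum_singleton]
    have haR : ((u:ℝ)/a) = 3 := by
      have : (u:ℝ) = 3 * a := by exact_mod_cast h3a
      rw [this]; field_simp
    rw [haR]; linarith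
  · -- main case: 7a ≤ u
    have h2i3a : 2 * i + 2 ≤ 3 * a + u := h2ia
    have h2i3aR : 2 * (i:ℝ) + 2 ≤ 3 * a + u := by exact_mod_cast h2i3a
    have hsplit := Finset.sum_filter_add_sum_filter_not F (fun d => 3 * d = u)
      (fun d => ((u:ℝ)/d - 1))
    set A := F.filter (fun d => 3 * d = u) with hA
    set B := F.filter (fun d => ¬ 3 * d = u) with hBdef
    have hAle : ∑ d ∈ A, ((u:ℝ)/d - 1) ≤ 2 := by
      rcases A.eq_empty_or_nonempty with hAe | ⟨d0, hd0⟩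
      · rw [hAe]; simp
      · have hAd0 : A = {d0} := by
          apply Finset.eq_singleton_iff_unique_mem.mpr
          refine ⟨hd0, ?_⟩
          intro d hd
          have h1 := (Finset.mem_filter.mp hd).2
          have h2 := (Finset.mem_filter.mp hd0).2
          omega
        rw [hAd0, Finset.sum_singleton]
        have hd0F := (Finset.mem_filter.mp hd0).1
        have h3d0 := (Finset.mem_filter.mp hd0).2
        have hd0pos : 0 < d0 := by have := (hmem d0 hd0F).2.1; omega
        have : ((u:ℝ)/d0) = 3 := by
          have : (u:ℝ) = 3 * d0 := by exact_mod_cast h3d0.symm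
          rw [this]
          field_simp
        rw [this]; norm_num
    have hBle : ∑ d ∈ B, ((u:ℝ)/d - 1) ≤ (u:ℝ) - 3*a - 3 := by
      set J := (Finset.range a).filter (fun j => 7 * (a + 2 * j) ≤ u) with hJ
      have hJ0 : (0 : ℕ) ∈ J := by
        rw [hJ, Finset.mem_filter, Finset.mem_range]
        constructor
        · omega
        · omega
      have hJne : J.Nonempty := ⟨0, hJ0⟩
      set M := J.max' hJne with hM
      have hMJ : M ∈ J := J.max'_mem hJne
      have hMa : M < a := by
        have := (Finset.mem_filter.mp hMJ).1
        exact Finset.mem_range.mp this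
      have hMu : 7 * (a + 2 * M) ≤ u := (Finset.mem_filter.mp hMJ).2
      -- B ⊆ image
      have hBsub : B ⊆ J.image (fun j => a + 2 * j) := by
        intro d hd
        have hdF := (Finset.mem_filter.mp hd).1
        have h3d := (Finset.mem_filter.mp hd).2
        obtain ⟨hdu, hd1, hdvd, hdmod, hd2i, hdm⟩ := hmem d hdF
        obtain ⟨hdodd, hd37⟩ := hud d hdF
        have h7d : 7 * d ≤ u := by
          rcases hd37 with h | h
          · omega
          · exact h
        have hale : a ≤ d := F.min'_le d hdF
        have hdle : d + 2 ≤ 3 * a := by omega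
        refine Finset.mem_image.mpr ⟨(d - a)/2, ?_, ?_⟩
        · rw [hJ, Finset.mem_filter, Finset.mem_range]
          constructor
          · omega
          · have : a + 2 * ((d - a)/2) = d := by omega
            rw [this]; exact h7d
        · omega
      have hnonneg : ∀ t ∈ J.image (fun j => a + 2 * j), (0:ℝ) ≤ (u:ℝ)/t - 1 := by
        intro t ht
        obtain ⟨j, hjJ, rfl⟩ := Finset.mem_image.mp ht
        have h7t : 7 * (a + 2 * j) ≤ u := (Finset.mem_filter.mp hjJ).2
        have htpos : 0 < a + 2 * j := by omega
        have h1 : (1:ℝ) ≤ (u:ℝ)/(a + 2*j) := by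
          rw [le_div_iff₀ (by exact_mod_cast htpos)]
          have : ((a + 2*j : ℕ):ℝ) ≤ (u:ℝ) := by exact_mod_cast (by omega : a + 2*j ≤ u)
          push_cast at this ⊢
          linarith
        push_cast
        linarith
      calc ∑ d ∈ B, ((u:ℝ)/d - 1)
          ≤ ∑ t ∈ J.image (fun j => a + 2 * j), ((u:ℝ)/t - 1) := by
            apply Finset.sum_le_sum_of_subset_of_nonneg hBsub
            intro t ht _
            exact hnonneg t ht
        _ = ∑ j ∈ J, ((u:ℝ)/(a + 2*j) - 1) := by
            rw [Finset.sum_image (by intro x _ y _ hxy; simp only at hxy; omega)]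
            refine Finset.sum_congr rfl fun j _ => ?_
            push_cast
            ring
        _ ≤ ∑ j ∈ Finset.range (M + 1), ((u:ℝ)/(a + 2*j) - 1) := by
            apply Finset.sum_le_sum_of_subset_of_nonneg
            · intro j hj
              exact Finset.mem_range.mpr (Nat.lt_succ_of_le (J.le_max' j hj))
            · intro j hj _
              have hjM : j ≤ M := Nat.lt_succ_iff.mp (Finset.mem_range.mp hj)
              have h7t : 7 * (a + 2 * j) ≤ u := by omega
              have htpos : 0 < a + 2 * j := by omega
              have h1 : (1:ℝ) ≤ (u:ℝ)/((a:ℝ) + 2*j) := by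
                rw [le_div_iff₀ (by positivity)]
                have : ((a + 2*j : ℕ):ℝ) ≤ (u:ℝ) := by exact_mod_cast (by omega : a + 2*j ≤ u)
                push_cast at this ⊢
                linarith
              push_cast
              linarith
        _ ≤ (u:ℝ) - 3*a - 3 := by
            have := core_sum u a (M + 1) ha3 (by omega) (by omega) (by simpa using hMu)
            linarith [this]
    have : ∑ d ∈ F, ((u:ℝ)/d - 1) ≤ (u:ℝ) - 3*a - 1 := by
      rw [← hsplit]; linarith
    have haRu : 7 * (a:ℝ) ≤ u := by exact_mod_cast h7a
    linarith
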